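/- Let (X, μ) be a measure space, let E be a real inner product space, let p > 1, and let F, G : X → E be measurable functions with 0 < ∫_X |F|^p dμ < ∞ and ∫_X |G|^p dμ < ∞. Then equality ∫_X |F(x)|^{p-2} ⟨F(x), G(x)⟩ dμ(x) = (∫_X |F|^p dμ)^{(p-1)/p} · (∫_X |G|^p dμ)^{1/p} holds if and only if there exists ν ≥ 0 such that G = ν F μ-almost everywhere (the integrand |F(x)|^{p-2} ⟨F(x), G(x)⟩ being understood as 0 where F(x) = 0). -/

import Mathlib

open MeasureTheory Real

private lemma psi_aux {p : ℝ} (hp : 1 < p) {t : ℝ} (ht : 0 ≤ t) :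
    0 ≤ t ^ p / p - t + (p - 1) / p ∧
      (t ^ p / p - t + (p - 1) / p = 0 → t = 1) := by
  have hp0 : (0:ℝ) < p := lt_trans one_pos hp
  have hp1 : 0 < p - 1 := sub_pos.mpr hp
  set ψ : ℝ → ℝ := fun t => t ^ p / p - t + (p - 1) / p with hψdef
  have hd : ∀ x : ℝ, HasDerivAt ψ (x ^ (p-1) - 1) x := by
    intro x
    have h1 : HasDerivAt (fun t : ℝ => t ^ p) (p * x ^ (p-1)) x :=
      Real.hasDerivAt_rpow_const (Or.inr hp.le)
    have h2 := ((h1.div_const p).sub (hasDerivAt_id x)).add_const ((p-1)/p)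
    convert h2 using 1
    · rfl
    · rfl
    · rfl
    rw [mul_div_cancel_left₀ _ hp0.ne']
  have hcont : Continuous ψ :=
    continuous_iff_continuousAt.mpr fun x => (hd x).continuousAt
  have hψ1 : ψ 1 = 0 := by
    simp only [hψdef, Real.one_rpow]
    field_simp
    ring
  have hmono : StrictMonoOn ψ (Set.Ici 1) := by
    apply strictMonoOn_of_deriv_pos (convex_Ici 1) hcont.continuousOn
    intro x hx
    rw [interior_Ici] at hx
    rw [(hd x).deriv]
    have h1x : (1:ℝ) < x ^ (p-1) := by
      calc (1:ℝ) = 1 ^ (p-1) := (Real.one_rpow _).symm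
      _ < x ^ (p-1) := Real.rpow_lt_rpow zero_le_one hx hp1
    linarith
  have hanti : StrictAntiOn ψ (Set.Icc 0 1) := by
    apply strictAntiOn_of_deriv_neg (convex_Icc 0 1) hcont.continuousOn
    intro x hx
    rw [interior_Icc] at hx
    rw [(hd x).deriv]
    have h1x : x ^ (p-1) < 1 := Real.rpow_lt_one hx.1.le hx.2 hp1
    linarith
  have key : t ≠ 1 → 0 < ψ t := by
    intro hne
    rcases lt_or_gt_of_ne hne with h | h
    · have := hanti (Set.mem_Icc.mpr ⟨ht, h.le⟩) (Set.mem_Icc.mpr ⟨zero_le_one, le_refl 1⟩) h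
      rwa [hψ1] at this
    · have := hmono (Set.mem_Ici.mpr le_rfl) (Set.mem_Ici.mpr h.le) h
      rwa [hψ1] at this
  constructor
  · rcases eq_or_ne t 1 with h | h
    · subst h
      exact le_of_eq hψ1.symm
    · exact (key h).le
  · intro h0
    by_contra hne
    exact absurd h0 (ne_of_gt (key hne))

private lemma young_aux {p : ℝ} (hp : 1 < p) {a b : ℝ} (ha : 0 ≤ a) (hb : 0 ≤ b) :
    a ^ (p-1) * b ≤ (p-1)/p * a ^ p + 1/p * b ^ p ∧
      (a ^ (p-1) * b = (p-1)/p * a ^ p + 1/p * b ^ p → a = b) := by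
  have hp0 : (0:ℝ) < p := lt_trans one_pos hp
  rcases eq_or_lt_of_le ha with rfl | ha'
  · rw [Real.zero_rpow (by linarith : p - 1 ≠ 0), Real.zero_rpow (ne_of_gt hp0), zero_mul,
      mul_zero, zero_add]
    constructor
    · positivity
    · intro h
      have hbp : b ^ p = 0 := by
        have hpne : (1/p) ≠ 0 := by positivity
        field_simp at h
        linarith [h]
      exact ((Real.rpow_eq_zero hb (ne_of_gt hp0)).mp hbp).symm
  · have hap : (0:ℝ) < a ^ p := Real.rpow_pos_of_pos ha' p
    have hid : (p-1)/p * a ^ p + 1/p * b ^ p - a ^ (p-1) * b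
        = a ^ p * ((b/a) ^ p / p - b/a + (p-1)/p) := by
      have h1 : (b/a) ^ p = b ^ p / a ^ p := Real.div_rpow hb ha'.le p
      have h2 : a ^ (p-1) = a ^ p / a := by
        rw [Real.rpow_sub ha', Real.rpow_one]
      rw [h1, h2]
      field_simp
      ring
    have hψ := psi_aux hp (div_nonneg hb ha'.le) (p := p)
    constructor
    · nlinarith [hψ.1]
    · intro he
      have h0 : a ^ p * ((b/a)^p/p - b/a + (p-1)/p) = 0 := by rw [← hid]; linarith
      have hz : (b/a)^p/p - b/a + (p-1)/p = 0 := by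
        rcases mul_eq_zero.mp h0 with h | h
        · exact absurd h (ne_of_gt hap)
        · exact h
      have hba := hψ.2 hz
      field_simp at hba
      linarith

set_option maxHeartbeats 2000000 in
/-- Equality case of the auxiliary Hölder/Cauchy–Schwarz
inequality: equality holds iff `G = ν F` μ-a.e. for some `ν ≥ 0`. -/
theorem stmt_5 {X : Type*} [MeasurableSpace X] (μ : Measure X)
    {E : Type*} [NormedAddCommGroup E] [InnerProductSpace ℝ E]
    [MeasurableSpace E] [BorelSpace E]
    (p : ℝ) (hp : 1 < p) (F G : X → E)
    (hFm : Measurable F) (hGm : Measurable G)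
    (hF : Integrable (fun x => ‖F x‖ ^ p) μ)
    (hFpos : 0 < ∫ x, ‖F x‖ ^ p ∂μ)
    (hG : Integrable (fun x => ‖G x‖ ^ p) μ) :
    (∫ x, ‖F x‖ ^ (p - 2) * (inner ℝ (F x) (G x) : ℝ) ∂μ =
        (∫ x, ‖F x‖ ^ p ∂μ) ^ ((p - 1) / p) * (∫ x, ‖G x‖ ^ p ∂μ) ^ (1 / p)) ↔
      ∃ ν : ℝ, 0 ≤ ν ∧ ∀ᵐ x ∂μ, G x = ν • F x := by
  have hp0 : (0:ℝ) < p := lt_trans one_pos hp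
  have hp1 : (0:ℝ) < p - 1 := sub_pos.mpr hp
  have hpow1 : ∀ t : ℝ, 0 ≤ t → t ^ (p-2) * t = t ^ (p-1) := by
    intro t ht
    rcases eq_or_lt_of_le ht with rfl | ht'
    · rw [mul_zero, Real.zero_rpow (by linarith : p - 1 ≠ 0)]
    · calc t ^ (p-2) * t = t ^ (p-2) * t ^ (1:ℝ) := by rw [Real.rpow_one]
      _ = t ^ ((p-2)+1) := (Real.rpow_add ht' _ _).symm
      _ = t ^ (p-1) := by ring_nf
  have hpow2 : ∀ t : ℝ, 0 ≤ t → t ^ (p-1) * t = t ^ p := by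
    intro t ht
    rcases eq_or_lt_of_le ht with rfl | ht'
    · rw [mul_zero, Real.zero_rpow (ne_of_gt hp0)]
    · calc t ^ (p-1) * t = t ^ (p-1) * t ^ (1:ℝ) := by rw [Real.rpow_one]
      _ = t ^ ((p-1)+1) := (Real.rpow_add ht' _ _).symm
      _ = t ^ p := by ring_nf
  set I : X → ℝ := fun x => ‖F x‖ ^ (p - 2) * (inner ℝ (F x) (G x) : ℝ) with hIdef
  set IF := ∫ x, ‖F x‖ ^ p ∂μ with hIFdef
  set IG := ∫ x, ‖G x‖ ^ p ∂μ with hIGdef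
  have hIG0 : 0 ≤ IG := integral_nonneg fun x => Real.rpow_nonneg (norm_nonneg _) p
  have hIle : ∀ x, I x ≤ ‖F x‖ ^ (p-1) * ‖G x‖ := by
    intro x
    calc I x = ‖F x‖ ^ (p-2) * (inner ℝ (F x) (G x) : ℝ) := rfl
      _ ≤ ‖F x‖ ^ (p-2) * (‖F x‖ * ‖G x‖) :=
          mul_le_mul_of_nonneg_left (real_inner_le_norm _ _)
            (Real.rpow_nonneg (norm_nonneg _) _)
      _ = (‖F x‖ ^ (p-2) * ‖F x‖) * ‖G x‖ := by ring
      _ = ‖F x‖ ^ (p-1) * ‖G x‖ := by rw [hpow1 _ (norm_nonneg _)]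
  constructor
  · -- forward
    intro heq
    rcases hIG0.eq_or_lt with hIGz | hIGpos
    · refine ⟨0, le_refl 0, ?_⟩
      have h0 : (fun x => ‖G x‖ ^ p) =ᵐ[μ] 0 :=
        (integral_eq_zero_iff_of_nonneg
          (fun x => Real.rpow_nonneg (norm_nonneg _) p) hG).mp hIGz.symm
      filter_upwards [h0] with x hx
      simp only [Pi.zero_apply] at hx
      have hG0 : ‖G x‖ = 0 := (Real.rpow_eq_zero (norm_nonneg _) (ne_of_gt hp0)).mp hx
      rw [norm_eq_zero] at hG0
      rw [hG0, zero_smul]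
    · set A := IF ^ (1/p) with hAdef
      set B := IG ^ (1/p) with hBdef
      have hA : 0 < A := Real.rpow_pos_of_pos hFpos _
      have hB : 0 < B := Real.rpow_pos_of_pos hIGpos _
      have hAp : A ^ p = IF := by
        rw [hAdef, ← Real.rpow_mul hFpos.le, one_div_mul_cancel (ne_of_gt hp0), Real.rpow_one]
      have hBp : B ^ p = IG := by
        rw [hBdef, ← Real.rpow_mul hIG0, one_div_mul_cancel (ne_of_gt hp0), Real.rpow_one]
      set K := A ^ (p-1) * B with hKdef
      have hK : 0 < K := mul_pos (Real.rpow_pos_of_pos hA _) hB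
      have hR : IF ^ ((p-1)/p) * IG ^ (1/p) = K := by
        rw [hKdef, hAdef, ← Real.rpow_mul hFpos.le,
          (by ring : (1/p)*(p-1) = (p-1)/p)]
      have hIint : Integrable I μ := by
        by_contra hni
        rw [integral_undef hni, hR] at heq
        linarith
      set c₁ := K * ((p-1)/p) / A ^ p with hc₁def
      set c₂ := K * (1/p) / B ^ p with hc₂def
      set J : X → ℝ := fun x => c₁ * ‖F x‖ ^ p + c₂ * ‖G x‖ ^ p with hJdef
      have hApne : A ^ p ≠ 0 := ne_of_gt (Real.rpow_pos_of_pos hA p)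
      have hBpne : B ^ p ≠ 0 := ne_of_gt (Real.rpow_pos_of_pos hB p)
      -- pointwise key inequality and equality case
      have hc : ∀ a b : ℝ, 0 ≤ a → 0 ≤ b →
          (a ^ (p-1) * b ≤ c₁ * a ^ p + c₂ * b ^ p ∧
            (a ^ (p-1) * b = c₁ * a ^ p + c₂ * b ^ p → b * A = a * B)) := by
        intro a b ha hb
        have hy := young_aux hp (div_nonneg ha hA.le) (div_nonneg hb hB.le)
        have hL : K * ((a/A) ^ (p-1) * (b/B)) = a ^ (p-1) * b := by
          rw [Real.div_rpow ha hA.le, hKdef]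
          have hA1 : A ^ (p-1) ≠ 0 := ne_of_gt (Real.rpow_pos_of_pos hA _)
          field_simp
          try ring
        have hRw : K * ((p-1)/p * (a/A) ^ p + 1/p * (b/B) ^ p) = c₁ * a ^ p + c₂ * b ^ p := by
          rw [Real.div_rpow ha hA.le, Real.div_rpow hb hB.le, hc₁def, hc₂def]
          field_simp
        constructor
        · have hmul := mul_le_mul_of_nonneg_left hy.1 hK.le
          rw [hL, hRw] at hmul
          exact hmul
        · intro he
          have h2 : K * ((a/A) ^ (p-1) * (b/B)) = K * ((p-1)/p * (a/A) ^ p + 1/p * (b/B) ^ p) := by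
            rw [hL, hRw]; exact he
          have hba := hy.2 (mul_left_cancel₀ (ne_of_gt hK) h2)
          field_simp at hba
          linarith
      have hJint : Integrable J μ := (hF.const_mul c₁).add (hG.const_mul c₂)
      have hJval : ∫ x, J x ∂μ = K := by
        rw [hJdef]
        rw [integral_add (hF.const_mul c₁) (hG.const_mul c₂), integral_const_mul,
          integral_const_mul, ← hIFdef, ← hIGdef, ← hAp, ← hBp, hc₁def, hc₂def]
        field_simp
        ring
      have hnonneg : ∀ x, 0 ≤ J x - I x := fun x =>
        sub_nonneg.mpr (le_trans (hIle x)
          ((hc _ _ (norm_nonneg _) (norm_nonneg _)).1))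
      have hzero : ∫ x, (J x - I x) ∂μ = 0 := by
        rw [integral_sub hJint hIint, hJval, heq, hR, sub_self]
      have hae : (fun x => J x - I x) =ᵐ[μ] 0 :=
        (integral_eq_zero_iff_of_nonneg hnonneg (hJint.sub hIint)).mp hzero
      refine ⟨B / A, div_nonneg hB.le hA.le, ?_⟩
      filter_upwards [hae] with x hx
      simp only [Pi.zero_apply] at hx
      have hJx : I x = J x := by linarith [hx]
      have hmid : ‖F x‖ ^ (p-1) * ‖G x‖ = c₁ * ‖F x‖ ^ p + c₂ * ‖G x‖ ^ p := by
        refine le_antisymm ((hc _ _ (norm_nonneg _) (norm_nonneg _)).1) ?_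
        calc c₁ * ‖F x‖ ^ p + c₂ * ‖G x‖ ^ p = J x := rfl
          _ = I x := hJx.symm
          _ ≤ ‖F x‖ ^ (p-1) * ‖G x‖ := hIle x
      have hba : ‖G x‖ * A = ‖F x‖ * B :=
        (hc _ _ (norm_nonneg _) (norm_nonneg _)).2 hmid
      rcases eq_or_ne (F x) 0 with hF0 | hF0
      · have hGz : ‖G x‖ = 0 := by
          rw [hF0, norm_zero, zero_mul] at hba
          have := hba
          nlinarith
        rw [norm_eq_zero] at hGz
        rw [hGz, hF0, smul_zero]
      · have hFn : 0 < ‖F x‖ := norm_pos_iff.mpr hF0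
        have hIx : I x = ‖F x‖ ^ (p-1) * ‖G x‖ := by
          rw [hJx, hJdef]; exact hmid.symm
        have hinner : (inner ℝ (F x) (G x) : ℝ) = ‖F x‖ * ‖G x‖ := by
          have hpw : (0:ℝ) < ‖F x‖ ^ (p-2) := Real.rpow_pos_of_pos hFn _
          apply mul_left_cancel₀ (ne_of_gt hpw)
          calc ‖F x‖ ^ (p-2) * (inner ℝ (F x) (G x) : ℝ) = I x := rfl
            _ = ‖F x‖ ^ (p-1) * ‖G x‖ := hIx
            _ = (‖F x‖ ^ (p-2) * ‖F x‖) * ‖G x‖ := by rw [hpow1 _ (norm_nonneg _)]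
            _ = ‖F x‖ ^ (p-2) * (‖F x‖ * ‖G x‖) := by ring
        have hpar : ‖G x‖ • F x = ‖F x‖ • G x := inner_eq_norm_mul_iff_real.mp hinner
        have h3 : (‖F x‖⁻¹ * ‖G x‖) • F x = G x := by
          rw [← smul_smul, hpar, smul_smul, inv_mul_cancel₀ (ne_of_gt hFn), one_smul]
        have hcoef : ‖F x‖⁻¹ * ‖G x‖ = B / A := by
          field_simp [ne_of_gt hFn, ne_of_gt hA]
          linear_combination hba
        rw [← h3, hcoef]
  · -- backward
    rintro ⟨ν, hν, hGF⟩
    have hIeq : ∀ᵐ x ∂μ, I x = ν * ‖F x‖ ^ p := by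
      filter_upwards [hGF] with x hx
      calc I x = ‖F x‖ ^ (p-2) * (inner ℝ (F x) (G x) : ℝ) := rfl
        _ = ‖F x‖ ^ (p-2) * (ν * (‖F x‖ * ‖F x‖)) := by
            rw [hx, real_inner_smul_right, real_inner_self_eq_norm_mul_norm]
        _ = ν * ((‖F x‖ ^ (p-2) * ‖F x‖) * ‖F x‖) := by ring
        _ = ν * ‖F x‖ ^ p := by rw [hpow1 _ (norm_nonneg _), hpow2 _ (norm_nonneg _)]
    have hGnorm : ∀ᵐ x ∂μ, ‖G x‖ ^ p = ν ^ p * ‖F x‖ ^ p := by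
      filter_upwards [hGF] with x hx
      rw [hx, norm_smul, Real.norm_eq_abs, abs_of_nonneg hν,
        Real.mul_rpow hν (norm_nonneg _)]
    have h1 : ∫ x, I x ∂μ = ν * IF := by
      rw [integral_congr_ae hIeq, integral_const_mul]
    have h2 : IG = ν ^ p * IF := by
      rw [hIGdef, integral_congr_ae hGnorm, integral_const_mul]
    have e1 : (ν ^ p) ^ (1/p) = ν := by
      rw [← Real.rpow_mul hν, mul_one_div_cancel (ne_of_gt hp0), Real.rpow_one]
    have e2 : IF ^ ((p-1)/p) * IF ^ (1/p) = IF := by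
      rw [← Real.rpow_add hFpos, ← add_div, sub_add_cancel,
        div_self (ne_of_gt hp0), Real.rpow_one]
    rw [h1, h2, Real.mul_rpow (Real.rpow_nonneg hν p) hFpos.le, e1,
      show IF ^ ((p-1)/p) * (ν * IF ^ (1/p)) = ν * (IF ^ ((p-1)/p) * IF ^ (1/p)) from by ring,
      e2]
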